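/- Suppose the first Dirichlet eigenfunction Ψ₀ of the distributional Sturm–Liouville problem has no zeros in (a,b), and let ψ₀ be a real eigenfunction of the coupled condition y(b) = k₁₁ y(a), y^[1](b) = k₂₁ y(a) + k₂₂ y^[1](a) with k₁₁ > 0, associated with an eigenvalue λ₀(K) < λ₀ᴰ. Then ψ₀ has no zeros in [a,b]. -/

import Mathlib

open MeasureTheory intervalIntegral Set

/-- A real (Carathéodory) solution of the distributional Sturm–Liouville system
`y′ = (1/p)·y¹ − s·y`, `(y¹)′ = s·y¹ + (q − λr)·y` on `[a,b]`, in integral form. -/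
def SLRSolution (a b lam : ℝ) (p q r s : ℝ → ℝ) (y y1 : ℝ → ℝ) : Prop :=
  ContinuousOn y (Set.Icc a b) ∧ ContinuousOn y1 (Set.Icc a b) ∧
  ∀ x ∈ Set.Icc a b,
    y x = y a + ∫ t in a..x, (1 / p t * y1 t - s t * y t) ∧
    y1 x = y1 a + ∫ t in a..x, (s t * y1 t + (q t - lam * r t) * y t)

lemma mul_cont_integrableOn {a b : ℝ} {K y : ℝ → ℝ} (hK : IntegrableOn K (Set.Ioo a b))
    (hy : ContinuousOn y (Set.Icc a b)) :
    IntegrableOn (fun t => K t * y t) (Set.Icc a b) := by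
  have hK' : IntegrableOn K (Set.Icc a b) := by
    rwa [integrableOn_Icc_iff_integrableOn_Ioo]
  obtain ⟨C, hC⟩ := isCompact_Icc.exists_bound_of_continuousOn hy
  have hm : AEStronglyMeasurable (fun t => K t * y t) (volume.restrict (Set.Icc a b)) :=
    hK'.aestronglyMeasurable.mul (hy.aestronglyMeasurable measurableSet_Icc)
  refine Integrable.mono' (hK'.norm.const_mul C) hm ?_
  filter_upwards [ae_restrict_mem measurableSet_Icc] with t ht
  have := hC t ht
  simp only [Real.norm_eq_abs, abs_mul] at *
  nlinarith [abs_nonneg (K t), abs_nonneg (y t)]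

lemma mul_cont_intervalIntegrable {a b : ℝ} {K y : ℝ → ℝ} (hK : IntegrableOn K (Set.Ioo a b))
    (hy : ContinuousOn y (Set.Icc a b)) {x₁ x₂ : ℝ} (h₁ : x₁ ∈ Set.Icc a b)
    (h₂ : x₂ ∈ Set.Icc a b) :
    IntervalIntegrable (fun t => K t * y t) volume x₁ x₂ := by
  rw [intervalIntegrable_iff]
  exact (mul_cont_integrableOn hK hy).mono_set
    ((Set.uIoc_subset_uIcc).trans (Set.uIcc_subset_Icc h₁ h₂))

lemma fubini_triangle {c d : ℝ} {f g : ℝ → ℝ}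
    (hf : IntegrableOn f (Set.Ioc c d)) (hg : IntegrableOn g (Set.Ioc c d)) :
    (∫ t in Set.Ioc c d, f t * ∫ u in Set.Ioc t d, g u)
      = ∫ u in Set.Ioc c d, (∫ t in Set.Ioc c u, f t) * g u := by
  set μ := volume.restrict (Set.Ioc c d) with hμ
  have hmeas : MeasurableSet {z : ℝ × ℝ | z.1 < z.2} :=
    measurableSet_lt measurable_fst measurable_snd
  have hFi : Integrable
      ({z : ℝ × ℝ | z.1 < z.2}.indicator (fun z => f z.1 * g z.2)) (μ.prod μ) :=
    (hf.mul_prod hg).indicator hmeas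
  have key := MeasureTheory.integral_integral_swap (f := fun t u =>
      {z : ℝ × ℝ | z.1 < z.2}.indicator (fun z => f z.1 * g z.2) (t, u))
      (μ := μ) (ν := μ) (by exact hFi)
  have h1 : (∫ t, ∫ u, {z : ℝ × ℝ | z.1 < z.2}.indicator (fun z => f z.1 * g z.2) (t, u) ∂μ ∂μ)
      = ∫ t in Set.Ioc c d, f t * ∫ u in Set.Ioc t d, g u := by
    rw [hμ]
    refine setIntegral_congr_fun measurableSet_Ioc (fun t ht => ?_)
    have : (fun u => {z : ℝ × ℝ | z.1 < z.2}.indicator (fun z => f z.1 * g z.2) (t, u))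
        = (Set.Ioi t).indicator (fun u => f t * g u) := by
      ext u
      by_cases h : t < u <;> simp [Set.indicator, h, Set.mem_setOf_eq]
    rw [this, MeasureTheory.integral_indicator measurableSet_Ioi, Measure.restrict_restrict measurableSet_Ioi]
    have hset : Set.Ioi t ∩ Set.Ioc c d = Set.Ioc t d := by
      ext u
      simp only [Set.mem_inter_iff, Set.mem_Ioi, Set.mem_Ioc]
      exact ⟨fun ⟨h1, _, h3⟩ => ⟨h1, h3⟩, fun ⟨h1, h3⟩ => ⟨h1, ht.1.trans h1, h3⟩⟩
    rw [hset, MeasureTheory.integral_const_mul]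
  have h2 : (∫ u, ∫ t, {z : ℝ × ℝ | z.1 < z.2}.indicator (fun z => f z.1 * g z.2) (t, u) ∂μ ∂μ)
      = ∫ u in Set.Ioc c d, (∫ t in Set.Ioc c u, f t) * g u := by
    rw [hμ]
    refine setIntegral_congr_fun measurableSet_Ioc (fun u hu => ?_)
    have : (fun t => {z : ℝ × ℝ | z.1 < z.2}.indicator (fun z => f z.1 * g z.2) (t, u))
        = (Set.Iio u).indicator (fun t => f t * g u) := by
      ext t
      by_cases h : t < u <;> simp [Set.indicator, h, Set.mem_setOf_eq]
    rw [this, MeasureTheory.integral_indicator measurableSet_Iio, Measure.restrict_restrict measurableSet_Iio]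
    have hset : Set.Iio u ∩ Set.Ioc c d = Set.Ioo c u := by
      ext t
      simp only [Set.mem_inter_iff, Set.mem_Iio, Set.mem_Ioo, Set.mem_Ioc]
      exact ⟨fun ⟨h1, h2, _⟩ => ⟨h2, h1⟩, fun ⟨h2, h1⟩ => ⟨h1, h2, (h1.le.trans hu.2)⟩⟩
    rw [hset, MeasureTheory.integral_mul_const, ← integral_Ioc_eq_integral_Ioo]
  rw [← h1, ← h2, key]

lemma prod_rule {c d : ℝ} (hcd : c ≤ d) {f g F G : ℝ → ℝ}
    (hfi : IntegrableOn f (Set.Ioc c d)) (hgi : IntegrableOn g (Set.Ioc c d))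
    (hF : ∀ x ∈ Set.Icc c d, F x = F c + ∫ t in Set.Ioc c x, f t)
    (hG : ∀ x ∈ Set.Icc c d, G x = G c + ∫ t in Set.Ioc c x, g t) :
    F d * G d = F c * G c + ∫ t in Set.Ioc c d, (f t * G t + F t * g t) := by
  set A := ∫ t in Set.Ioc c d, f t with hA
  set B := ∫ t in Set.Ioc c d, g t with hB
  set If := fun x => ∫ t in Set.Ioc c x, f t with hIf
  set Ig := fun x => ∫ t in Set.Ioc c x, g t with hIg
  have hIfc : ContinuousOn If (Set.Icc c d) :=
    continuousOn_primitive ((integrableOn_Icc_iff_integrableOn_Ioc).mpr hfi)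
  have hIgc : ContinuousOn Ig (Set.Icc c d) :=
    continuousOn_primitive ((integrableOn_Icc_iff_integrableOn_Ioc).mpr hgi)
  -- integrabilities
  have hfIg : IntegrableOn (fun t => f t * Ig t) (Set.Ioc c d) :=
    (mul_cont_integrableOn (hfi.mono_set Set.Ioo_subset_Ioc_self) hIgc).mono_set
      Set.Ioc_subset_Icc_self
  have hgIf : IntegrableOn (fun t => g t * If t) (Set.Ioc c d) :=
    (mul_cont_integrableOn (hgi.mono_set Set.Ioo_subset_Ioc_self) hIfc).mono_set
      Set.Ioc_subset_Icc_self
  have hfB : IntegrableOn (fun t => f t * B) (Set.Ioc c d) := hfi.mul_const B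
  have hfJ : IntegrableOn (fun t => f t * ∫ u in Set.Ioc t d, g u) (Set.Ioc c d) := by
    have : (fun t => f t * ∫ u in Set.Ioc t d, g u) =ᵐ[volume.restrict (Set.Ioc c d)]
        (fun t => f t * B - f t * Ig t) := by
      filter_upwards [ae_restrict_mem measurableSet_Ioc] with t ht
      have hsplit : Ig t + (∫ u in Set.Ioc t d, g u) = B := by
        rw [hIg, hB, ← setIntegral_union (Set.Ioc_disjoint_Ioc_of_le le_rfl) measurableSet_Ioc
          (hgi.mono_set (Set.Ioc_subset_Ioc_right ht.2)) (hgi.mono_set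
          (Set.Ioc_subset_Ioc_left ht.1.le)), Set.Ioc_union_Ioc_eq_Ioc ht.1.le ht.2]
      have : (∫ u in Set.Ioc t d, g u) = B - Ig t := by linarith
      rw [this]; ring
    exact (Integrable.congr (hfB.sub hfIg) this.symm)
  -- the Fubini identity
  have hIfg' : IntegrableOn (fun t => If t * g t) (Set.Ioc c d) :=
    hgIf.congr_fun (fun t _ => mul_comm (g t) (If t)) measurableSet_Ioc
  have hfub := fubini_triangle hfi hgi
  have key : (∫ t in Set.Ioc c d, (f t * Ig t + If t * g t)) = A * B := by
    have e1 : (∫ t in Set.Ioc c d, (f t * Ig t + If t * g t))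
        = (∫ t in Set.Ioc c d, f t * Ig t) + ∫ t in Set.Ioc c d, If t * g t := by
      exact MeasureTheory.integral_add hfIg hIfg'
    have e2 : (∫ t in Set.Ioc c d, f t * Ig t)
        = (∫ t in Set.Ioc c d, f t * B) - ∫ t in Set.Ioc c d, f t * ∫ u in Set.Ioc t d, g u := by
      rw [← integral_sub hfB hfJ]
      refine setIntegral_congr_fun measurableSet_Ioc (fun t ht => ?_)
      have hsplit : Ig t + (∫ u in Set.Ioc t d, g u) = B := by
        rw [hIg, hB, ← setIntegral_union (Set.Ioc_disjoint_Ioc_of_le le_rfl) measurableSet_Ioc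
          (hgi.mono_set (Set.Ioc_subset_Ioc_right ht.2)) (hgi.mono_set
          (Set.Ioc_subset_Ioc_left ht.1.le)), Set.Ioc_union_Ioc_eq_Ioc ht.1.le ht.2]
      have h9 : (∫ u in Set.Ioc t d, g u) = B - Ig t := by linarith
      rw [h9]; ring
    have e3 : (∫ t in Set.Ioc c d, f t * B) = A * B := by
      rw [MeasureTheory.integral_mul_const]
    rw [e1, e2, e3, hfub]
    ring
  -- put together
  have hFd := hF d ⟨hcd, le_rfl⟩
  have hGd := hG d ⟨hcd, le_rfl⟩
  have eInt : (∫ t in Set.Ioc c d, (f t * G t + F t * g t))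
      = (∫ t in Set.Ioc c d, (f t * Ig t + If t * g t)) + (G c * A + F c * B) := by
    have e4 : (∫ t in Set.Ioc c d, (f t * G t + F t * g t))
        = ∫ t in Set.Ioc c d, ((f t * Ig t + If t * g t) + (G c * f t + F c * g t)) := by
      refine setIntegral_congr_fun measurableSet_Ioc (fun t ht => ?_)
      have hGt := hG t ⟨ht.1.le, ht.2⟩
      have hFt := hF t ⟨ht.1.le, ht.2⟩
      rw [hGt, hFt]; simp only [hIf, hIg]; ring
    have h5 : IntegrableOn (fun t => f t * Ig t + If t * g t) (Set.Ioc c d) := hfIg.add hIfg'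
    have h6 : IntegrableOn (fun t => G c * f t + F c * g t) (Set.Ioc c d) :=
      (hfi.const_mul _).add (hgi.const_mul _)
    have h7 : IntegrableOn (fun t => G c * f t) (Set.Ioc c d) := hfi.const_mul _
    have h8 : IntegrableOn (fun t => F c * g t) (Set.Ioc c d) := hgi.const_mul _
    rw [e4, MeasureTheory.integral_add h5 h6, MeasureTheory.integral_add h7 h8,
      MeasureTheory.integral_const_mul, MeasureTheory.integral_const_mul]
  rw [eInt, key, hFd, hGd]
  ring

lemma gronwall_zero {a b : ℝ} {u K : ℝ → ℝ}
    (hu : ContinuousOn u (Set.Icc a b)) (hunn : ∀ x ∈ Set.Icc a b, 0 ≤ u x)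
    (hK : IntegrableOn K (Set.Ioo a b))
    {x₀ : ℝ} (hx₀ : x₀ ∈ Set.Icc a b)
    (hineq : ∀ x ∈ Set.Icc a b, u x ≤ ∫ t in Set.uIoc x₀ x, K t * u t) :
    ∀ x ∈ Set.Icc a b, u x = 0 := by
  -- basic integrability
  have hKu : IntegrableOn (fun t => K t * u t) (Set.Icc a b) := mul_cont_integrableOn hK hu
  have hKabs : IntegrableOn (fun t => |K t|) (Set.Icc a b) := by
    have : IntegrableOn K (Set.Icc a b) := by rwa [integrableOn_Icc_iff_integrableOn_Ioo]
    exact this.norm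
  have hG : ContinuousOn (fun x => ∫ t in Set.Ioc a x, |K t|) (Set.Icc a b) :=
    continuousOn_primitive hKabs
  set G := fun x => ∫ t in Set.Ioc a x, |K t| with hGdef
  have hGsplit : ∀ {c x : ℝ}, a ≤ c → c ≤ x → x ≤ b →
      (∫ t in Set.Ioc c x, |K t|) = G x - G c := by
    intro c x hac hcx hxb
    have : (∫ t in Set.Ioc a c, |K t|) + ∫ t in Set.Ioc c x, |K t| = G x := by
      rw [hGdef, ← setIntegral_union (Set.Ioc_disjoint_Ioc_of_le le_rfl) measurableSet_Ioc
        (hKabs.mono_set (Set.Ioc_subset_Icc_self.trans (Set.Icc_subset_Icc_right (hcx.trans hxb))))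
        (hKabs.mono_set (fun t ht => ⟨hac.trans ht.1.le, ht.2.trans hxb⟩)),
        Set.Ioc_union_Ioc_eq_Ioc hac hcx]
    linarith
  have hux₀ : u x₀ = 0 := by
    have h1 := hineq x₀ hx₀
    rw [Set.uIoc_of_le le_rfl, Set.Ioc_self] at h1
    simp only [Measure.restrict_empty, integral_zero_measure] at h1
    exact le_antisymm h1 (hunn x₀ hx₀)
  intro x₁ hx₁
  by_contra hne
  have hupos : 0 < u x₁ := lt_of_le_of_ne (hunn x₁ hx₁) (Ne.symm hne)
  rcases lt_trichotomy x₀ x₁ with hlt | heq | hgt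
  · -- forward case
    set Z := {x : ℝ | x ∈ Set.Icc x₀ x₁ ∧ 0 < u x} with hZ
    have hZne : Z.Nonempty := ⟨x₁, ⟨⟨hlt.le, le_rfl⟩, hupos⟩⟩
    have hZbdd : BddBelow Z := ⟨x₀, fun z hz => hz.1.1⟩
    set c := sInf Z with hc
    have hcx₀ : x₀ ≤ c := le_csInf hZne (fun z hz => hz.1.1)
    have hcx₁ : c ≤ x₁ := csInf_le hZbdd ⟨⟨hlt.le, le_rfl⟩, hupos⟩
    have hcab : c ∈ Set.Icc a b := ⟨hx₀.1.trans hcx₀, hcx₁.trans hx₁.2⟩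
    have hzero_left : ∀ x, x₀ ≤ x → x < c → u x = 0 := by
      intro x hx hxc
      by_contra hne'
      have : 0 < u x := lt_of_le_of_ne (hunn x ⟨hx₀.1.trans hx, (hxc.le.trans hcx₁).trans hx₁.2⟩)
        (Ne.symm hne')
      exact absurd (csInf_le hZbdd ⟨⟨hx, hxc.le.trans hcx₁⟩, this⟩) (not_le.mpr hxc)
    have hucz : u c = 0 := by
      by_contra hne'
      have hcpos : 0 < u c := lt_of_le_of_ne (hunn c hcab) (Ne.symm hne')
      rcases eq_or_lt_of_le hcx₀ with heq' | hlt'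
      · rw [← heq'] at hcpos; rw [hux₀] at hcpos; exact lt_irrefl 0 hcpos
      · have hcw := (hu c hcab)
        rw [Metric.continuousWithinAt_iff] at hcw
        obtain ⟨δ, hδ, hδ'⟩ := hcw (u c) hcpos
        set x := max x₀ (c - δ/2) with hx
        have hx1 : x₀ ≤ x := le_max_left _ _
        have hx2 : x < c := max_lt hlt' (by linarith)
        have hxab : x ∈ Set.Icc a b := ⟨hx₀.1.trans hx1, (hx2.le.trans hcab.2)⟩
        have hdist : dist x c < δ := by
          rw [Real.dist_eq, abs_lt]
          constructor <;> [linarith [le_max_right x₀ (c - δ/2)]; linarith]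
        have := hδ' hxab hdist
        rw [Real.dist_eq] at this
        have := abs_lt.mp this
        have h0 := hzero_left x hx1 hx2
        linarith [h0]
    have hzero_Icc : ∀ x ∈ Set.Icc x₀ c, u x = 0 := by
      intro x hx
      rcases eq_or_lt_of_le hx.2 with h | h
      · rw [h]; exact hucz
      · exact hzero_left x hx.1 h
    have hcx₁' : c < x₁ := by
      rcases eq_or_lt_of_le hcx₁ with h | h
      · exfalso; rw [h] at hucz; rw [hucz] at hupos; exact lt_irrefl 0 hupos
      · exact h
    -- choose δ by continuity of G at c
    have hGc := (hG c hcab)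
    rw [Metric.continuousWithinAt_iff] at hGc
    obtain ⟨δ, hδpos, hδ⟩ := hGc (1/2) (by norm_num)
    set d := min x₁ (c + δ/2) with hd
    have hcd : c < d := lt_min hcx₁' (by linarith)
    have hdb : d ≤ b := (min_le_left _ _).trans hx₁.2
    have hdab : d ∈ Set.Icc a b := ⟨hcab.1.trans hcd.le, hdb⟩
    have hGd : G d - G c < 1/2 := by
      have hdist : dist d c < δ := by
        rw [Real.dist_eq, abs_lt]
        constructor <;> [linarith [hcd]; linarith [min_le_right x₁ (c + δ/2)]]
      have := hδ hdab hdist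
      rw [Real.dist_eq] at this
      have := abs_lt.mp this
      linarith [this.1, this.2]
    -- max of u on [c,d]
    obtain ⟨ξ, hξmem, hξmax⟩ := isCompact_Icc.exists_isMaxOn (Set.nonempty_Icc.mpr hcd.le)
      (hu.mono (Set.Icc_subset_Icc hcab.1 hdb))
    have hξab : ξ ∈ Set.Icc a b := ⟨hcab.1.trans hξmem.1, hξmem.2.trans hdb⟩
    have hMnn : 0 ≤ u ξ := hunn ξ hξab
    -- there is a positive point in [c,d]
    obtain ⟨z, hzZ, hzd⟩ := (csInf_lt_iff hZbdd hZne).mp hcd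
    have hzcd : z ∈ Set.Icc c d := ⟨csInf_le hZbdd hzZ, hzd.le⟩
    have hMpos : 0 < u ξ := lt_of_lt_of_le hzZ.2 (hξmax hzcd)
    -- the contraction estimate
    have hsplit : (∫ t in Set.uIoc x₀ ξ, K t * u t)
        = (∫ t in Set.Ioc x₀ c, K t * u t) + ∫ t in Set.Ioc c ξ, K t * u t := by
      rw [Set.uIoc_of_le (hcx₀.trans hξmem.1)]
      rw [← setIntegral_union (Set.Ioc_disjoint_Ioc_of_le le_rfl) measurableSet_Ioc
        (hKu.mono_set (fun t ht => ⟨hx₀.1.trans ht.1.le, ht.2.trans hcab.2⟩))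
        (hKu.mono_set (fun t ht => ⟨hcab.1.trans ht.1.le, ht.2.trans hξab.2⟩)),
        Set.Ioc_union_Ioc_eq_Ioc hcx₀ hξmem.1]
    have hfirst : (∫ t in Set.Ioc x₀ c, K t * u t) = 0 := by
      rw [setIntegral_congr_fun measurableSet_Ioc
        (g := fun _ => (0:ℝ)) (fun t ht => by rw [hzero_Icc t ⟨ht.1.le, ht.2⟩, mul_zero])]
      simp
    have hsecond : (∫ t in Set.Ioc c ξ, K t * u t) ≤ (G ξ - G c) * u ξ := by
      have h1 : (∫ t in Set.Ioc c ξ, K t * u t) ≤ ∫ t in Set.Ioc c ξ, |K t| * u ξ := by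
        refine setIntegral_mono_on
          (hKu.mono_set (fun t ht => ⟨hcab.1.trans ht.1.le, ht.2.trans hξab.2⟩))
          ((hKabs.mono_set (fun t ht => ⟨hcab.1.trans ht.1.le, ht.2.trans hξab.2⟩)).mul_const _)
          measurableSet_Ioc (fun t ht => ?_)
        have htab : t ∈ Set.Icc a b := ⟨hcab.1.trans ht.1.le, ht.2.trans hξab.2⟩
        have h2 : u t ≤ u ξ := hξmax ⟨ht.1.le, ht.2.trans hξmem.2⟩
        have h3 : 0 ≤ u t := hunn t htab
        calc K t * u t ≤ |K t| * u t := by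
              exact mul_le_mul_of_nonneg_right (le_abs_self _) h3
          _ ≤ |K t| * u ξ := mul_le_mul_of_nonneg_left h2 (abs_nonneg _)
      rw [MeasureTheory.integral_mul_const] at h1
      rwa [hGsplit hcab.1 hξmem.1 hξab.2] at h1
    have hGξ : G ξ - G c ≤ G d - G c := by
      have : G ξ ≤ G d := by
        have : (∫ t in Set.Ioc ξ d, |K t|) = G d - G ξ := hGsplit hξab.1 hξmem.2 hdb
        have hnn : 0 ≤ ∫ t in Set.Ioc ξ d, |K t| :=
          setIntegral_nonneg measurableSet_Ioc (fun t _ => abs_nonneg _)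
        linarith
      linarith
    have hfinal := hineq ξ hξab
    rw [hsplit, hfirst] at hfinal
    have : u ξ ≤ (G d - G c) * u ξ := by
      calc u ξ ≤ 0 + ∫ t in Set.Ioc c ξ, K t * u t := hfinal
        _ ≤ (G ξ - G c) * u ξ := by rw [zero_add]; exact hsecond
        _ ≤ (G d - G c) * u ξ := mul_le_mul_of_nonneg_right hGξ hMnn
    nlinarith [hGd, hMpos]
  · rw [← heq] at hupos; rw [hux₀] at hupos; exact lt_irrefl 0 hupos
  · -- backward case
    set Z := {x : ℝ | x ∈ Set.Icc x₁ x₀ ∧ 0 < u x} with hZ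
    have hZne : Z.Nonempty := ⟨x₁, ⟨⟨le_rfl, hgt.le⟩, hupos⟩⟩
    have hZbdd : BddAbove Z := ⟨x₀, fun z hz => hz.1.2⟩
    set c := sSup Z with hc
    have hcx₀ : c ≤ x₀ := csSup_le hZne (fun z hz => hz.1.2)
    have hcx₁ : x₁ ≤ c := le_csSup hZbdd ⟨⟨le_rfl, hgt.le⟩, hupos⟩
    have hcab : c ∈ Set.Icc a b := ⟨hx₁.1.trans hcx₁, hcx₀.trans hx₀.2⟩
    have hzero_right : ∀ x, c < x → x ≤ x₀ → u x = 0 := by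
      intro x hxc hx
      by_contra hne'
      have : 0 < u x := lt_of_le_of_ne (hunn x ⟨hx₁.1.trans (hcx₁.trans hxc.le), hx.trans hx₀.2⟩)
        (Ne.symm hne')
      exact absurd (le_csSup hZbdd ⟨⟨hcx₁.trans hxc.le, hx⟩, this⟩) (not_le.mpr hxc)
    have hucz : u c = 0 := by
      by_contra hne'
      have hcpos : 0 < u c := lt_of_le_of_ne (hunn c hcab) (Ne.symm hne')
      rcases eq_or_lt_of_le hcx₀ with heq' | hlt'
      · rw [heq'] at hcpos; rw [hux₀] at hcpos; exact lt_irrefl 0 hcpos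
      · have hcw := (hu c hcab)
        rw [Metric.continuousWithinAt_iff] at hcw
        obtain ⟨δ, hδ, hδ'⟩ := hcw (u c) hcpos
        set x := min x₀ (c + δ/2) with hx
        have hx1 : x ≤ x₀ := min_le_left _ _
        have hx2 : c < x := lt_min hlt' (by linarith)
        have hxab : x ∈ Set.Icc a b := ⟨hcab.1.trans hx2.le, hx1.trans hx₀.2⟩
        have hdist : dist x c < δ := by
          rw [Real.dist_eq, abs_lt]
          constructor <;> [linarith; linarith [min_le_right x₀ (c + δ/2)]]
        have := hδ' hxab hdist
        rw [Real.dist_eq] at this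
        have := abs_lt.mp this
        have h0 := hzero_right x hx2 hx1
        linarith [h0]
    have hzero_Icc : ∀ x ∈ Set.Icc c x₀, u x = 0 := by
      intro x hx
      rcases eq_or_lt_of_le hx.1 with h | h
      · rw [← h]; exact hucz
      · exact hzero_right x h hx.2
    have hcx₁' : x₁ < c := by
      rcases eq_or_lt_of_le hcx₁ with h | h
      · exfalso; rw [← h] at hucz; rw [hucz] at hupos; exact lt_irrefl 0 hupos
      · exact h
    have hGc := (hG c hcab)
    rw [Metric.continuousWithinAt_iff] at hGc
    obtain ⟨δ, hδpos, hδ⟩ := hGc (1/2) (by norm_num)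
    set d := max x₁ (c - δ/2) with hd
    have hcd : d < c := max_lt hcx₁' (by linarith)
    have hda : a ≤ d := hx₁.1.trans (le_max_left _ _)
    have hdab : d ∈ Set.Icc a b := ⟨hda, hcd.le.trans hcab.2⟩
    have hGd : G c - G d < 1/2 := by
      have hdist : dist d c < δ := by
        rw [Real.dist_eq, abs_lt]
        constructor <;> [linarith [le_max_right x₁ (c - δ/2)]; linarith [hcd]]
      have := hδ hdab hdist
      rw [Real.dist_eq] at this
      have := abs_lt.mp this
      linarith [this.1, this.2]
    obtain ⟨ξ, hξmem, hξmax⟩ := isCompact_Icc.exists_isMaxOn (Set.nonempty_Icc.mpr hcd.le)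
      (hu.mono (Set.Icc_subset_Icc hda hcab.2))
    have hξab : ξ ∈ Set.Icc a b := ⟨hda.trans hξmem.1, hξmem.2.trans hcab.2⟩
    have hMnn : 0 ≤ u ξ := hunn ξ hξab
    obtain ⟨z, hzZ, hzd⟩ := (lt_csSup_iff hZbdd hZne).mp hcd
    have hzcd : z ∈ Set.Icc d c := ⟨hzd.le, le_csSup hZbdd hzZ⟩
    have hMpos : 0 < u ξ := lt_of_lt_of_le hzZ.2 (hξmax hzcd)
    have hsplit : (∫ t in Set.uIoc x₀ ξ, K t * u t)
        = (∫ t in Set.Ioc ξ c, K t * u t) + ∫ t in Set.Ioc c x₀, K t * u t := by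
      rw [Set.uIoc_of_ge (hξmem.2.trans hcx₀)]
      rw [← setIntegral_union (Set.Ioc_disjoint_Ioc_of_le le_rfl) measurableSet_Ioc
        (hKu.mono_set (fun t ht => ⟨hξab.1.trans ht.1.le, ht.2.trans hcab.2⟩))
        (hKu.mono_set (fun t ht => ⟨hcab.1.trans ht.1.le, ht.2.trans hx₀.2⟩)),
        Set.Ioc_union_Ioc_eq_Ioc hξmem.2 hcx₀]
    have hfirst : (∫ t in Set.Ioc c x₀, K t * u t) = 0 := by
      rw [setIntegral_congr_fun measurableSet_Ioc
        (g := fun _ => (0:ℝ)) (fun t ht => by rw [hzero_Icc t ⟨ht.1.le, ht.2⟩, mul_zero])]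
      simp
    have hsecond : (∫ t in Set.Ioc ξ c, K t * u t) ≤ (G c - G ξ) * u ξ := by
      have h1 : (∫ t in Set.Ioc ξ c, K t * u t) ≤ ∫ t in Set.Ioc ξ c, |K t| * u ξ := by
        refine setIntegral_mono_on
          (hKu.mono_set (fun t ht => ⟨hξab.1.trans ht.1.le, ht.2.trans hcab.2⟩))
          ((hKabs.mono_set (fun t ht => ⟨hξab.1.trans ht.1.le, ht.2.trans hcab.2⟩)).mul_const _)
          measurableSet_Ioc (fun t ht => ?_)
        have htab : t ∈ Set.Icc a b := ⟨hξab.1.trans ht.1.le, ht.2.trans hcab.2⟩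
        have h2 : u t ≤ u ξ := hξmax ⟨hξmem.1.trans ht.1.le, ht.2⟩
        have h3 : 0 ≤ u t := hunn t htab
        calc K t * u t ≤ |K t| * u t := mul_le_mul_of_nonneg_right (le_abs_self _) h3
          _ ≤ |K t| * u ξ := mul_le_mul_of_nonneg_left h2 (abs_nonneg _)
      rw [MeasureTheory.integral_mul_const] at h1
      rwa [hGsplit hξab.1 hξmem.2 hcab.2] at h1
    have hGξ : G c - G ξ ≤ G c - G d := by
      have : G d ≤ G ξ := by
        have : (∫ t in Set.Ioc d ξ, |K t|) = G ξ - G d := hGsplit hda hξmem.1 hξab.2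
        have hnn : 0 ≤ ∫ t in Set.Ioc d ξ, |K t| :=
          setIntegral_nonneg measurableSet_Ioc (fun t _ => abs_nonneg _)
        linarith
      linarith
    have hfinal := hineq ξ hξab
    rw [hsplit, hfirst] at hfinal
    have : u ξ ≤ (G c - G d) * u ξ := by
      calc u ξ ≤ (∫ t in Set.Ioc ξ c, K t * u t) + 0 := hfinal
        _ ≤ (G c - G ξ) * u ξ := by rw [add_zero]; exact hsecond
        _ ≤ (G c - G d) * u ξ := mul_le_mul_of_nonneg_right hGξ hMnn
    nlinarith [hGd, hMpos]

section
variable {a b lam : ℝ} {p q r s y y1 : ℝ → ℝ}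

/-- short names for the two "derivative" integrands -/
lemma SLR_f_int (hp : IntegrableOn (fun x => 1 / p x) (Set.Ioo a b))
    (hs : IntegrableOn s (Set.Ioo a b))
    (hsol : SLRSolution a b lam p q r s y y1) :
    IntegrableOn (fun t => 1 / p t * y1 t - s t * y t) (Set.Icc a b) :=
  (mul_cont_integrableOn hp hsol.2.1).sub (mul_cont_integrableOn hs hsol.1)

lemma SLR_g_int (hq : IntegrableOn q (Set.Ioo a b)) (hr : IntegrableOn r (Set.Ioo a b))
    (hs : IntegrableOn s (Set.Ioo a b))
    (hsol : SLRSolution a b lam p q r s y y1) :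
    IntegrableOn (fun t => s t * y1 t + (q t - lam * r t) * y t) (Set.Icc a b) :=
  (mul_cont_integrableOn hs hsol.2.1).add
    (mul_cont_integrableOn (hq.sub (hr.const_mul lam)) hsol.1)

lemma integral_diff_form {F f : ℝ → ℝ} (hf : IntegrableOn f (Set.Icc a b))
    (hF : ∀ x ∈ Set.Icc a b, F x = F a + ∫ t in a..x, f t)
    {x₁ x₂ : ℝ} (h₁ : x₁ ∈ Set.Icc a b) (h₂ : x₂ ∈ Set.Icc a b) (h12 : x₁ ≤ x₂) :
    F x₂ = F x₁ + ∫ t in Set.Ioc x₁ x₂, f t := by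
  have hi : ∀ {u v : ℝ}, u ∈ Set.Icc a b → v ∈ Set.Icc a b →
      IntervalIntegrable f volume u v := by
    intro u v hu hv
    rw [intervalIntegrable_iff]
    exact hf.mono_set ((Set.uIoc_subset_uIcc).trans (Set.uIcc_subset_Icc hu hv))
  have e1 := hF x₁ h₁
  have e2 := hF x₂ h₂
  have e3 : (∫ t in a..x₁, f t) + (∫ t in x₁..x₂, f t) = ∫ t in a..x₂, f t :=
    integral_add_adjacent_intervals (hi (Set.left_mem_Icc.mpr (h₁.1.trans h₁.2)) h₁)
      (hi h₁ h₂)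
  rw [← intervalIntegral.integral_of_le h12]
  linarith

lemma SLR_unique (hp : IntegrableOn (fun x => 1 / p x) (Set.Ioo a b))
    (hq : IntegrableOn q (Set.Ioo a b)) (hr : IntegrableOn r (Set.Ioo a b))
    (hs : IntegrableOn s (Set.Ioo a b))
    (hsol : SLRSolution a b lam p q r s y y1)
    {x₀ : ℝ} (hx₀ : x₀ ∈ Set.Icc a b) (h0 : y x₀ = 0) (h1 : y1 x₀ = 0) :
    ∀ x ∈ Set.Icc a b, y x = 0 := by
  obtain ⟨hy, hy1, hsol'⟩ := hsol
  set f := fun t => 1 / p t * y1 t - s t * y t with hfdef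
  set g := fun t => s t * y1 t + (q t - lam * r t) * y t with hgdef
  have hfint : IntegrableOn f (Set.Icc a b) := SLR_f_int hp hs ⟨hy, hy1, hsol'⟩
  have hgint : IntegrableOn g (Set.Icc a b) := SLR_g_int hq hr hs ⟨hy, hy1, hsol'⟩
  set u := fun x => |y x| + |y1 x| with hudef
  set K := fun t => |1 / p t| + 2 * |s t| + |q t - lam * r t| with hKdef
  have hKint : IntegrableOn K (Set.Ioo a b) :=
    (hp.norm.add ((hs.norm).const_mul 2)).add (hq.sub (hr.const_mul lam)).norm
  have hucont : ContinuousOn u (Set.Icc a b) := hy.abs.add hy1.abs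
  have hunn : ∀ x ∈ Set.Icc a b, 0 ≤ u x := fun x _ => by positivity
  have hptw : ∀ t, |f t| + |g t| ≤ K t * u t := by
    intro t
    have e1 : |f t| ≤ |1 / p t| * |y1 t| + |s t| * |y t| :=
      (abs_sub _ _).trans (by rw [abs_mul, abs_mul])
    have e2 : |g t| ≤ |s t| * |y1 t| + |q t - lam * r t| * |y t| :=
      (abs_add_le _ _).trans (by rw [abs_mul, abs_mul])
    have n1 := abs_nonneg (1 / p t); have n2 := abs_nonneg (s t)
    have n3 := abs_nonneg (q t - lam * r t)
    have n4 := abs_nonneg (y t); have n5 := abs_nonneg (y1 t)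
    simp only [hKdef, hudef]
    nlinarith
  have hineq : ∀ x ∈ Set.Icc a b, u x ≤ ∫ t in Set.uIoc x₀ x, K t * u t := by
    intro x hx
    have hdy : y x - y x₀ = ∫ t in x₀..x, f t := by
      have e1 := hsol' x hx
      have e2 := hsol' x₀ hx₀
      have e3 : (∫ t in a..x₀, f t) + (∫ t in x₀..x, f t) = ∫ t in a..x, f t := by
        refine integral_add_adjacent_intervals ?_ ?_ <;>
        · rw [intervalIntegrable_iff]
          refine hfint.mono_set ((Set.uIoc_subset_uIcc).trans (Set.uIcc_subset_Icc ?_ ?_)) <;>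
            first
              | exact hx₀
              | exact hx
              | exact Set.left_mem_Icc.mpr (hx₀.1.trans hx₀.2)
      rw [e1.1, e2.1]; linarith
    have hdy1 : y1 x - y1 x₀ = ∫ t in x₀..x, g t := by
      have e1 := hsol' x hx
      have e2 := hsol' x₀ hx₀
      have e3 : (∫ t in a..x₀, g t) + (∫ t in x₀..x, g t) = ∫ t in a..x, g t := by
        refine integral_add_adjacent_intervals ?_ ?_ <;>
        · rw [intervalIntegrable_iff]
          refine hgint.mono_set ((Set.uIoc_subset_uIcc).trans (Set.uIcc_subset_Icc ?_ ?_)) <;>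
            first
              | exact hx₀
              | exact hx
              | exact Set.left_mem_Icc.mpr (hx₀.1.trans hx₀.2)
      rw [e1.2, e2.2]; linarith
    have hsub : Set.uIoc x₀ x ⊆ Set.Icc a b :=
      (Set.uIoc_subset_uIcc).trans (Set.uIcc_subset_Icc hx₀ hx)
    have hb1 : |y x| ≤ ∫ t in Set.uIoc x₀ x, ‖f t‖ := by
      rw [h0, sub_zero] at hdy; rw [hdy]
      simpa using intervalIntegral.norm_integral_le_integral_norm_uIoc (f := f) (a := x₀) (b := x)
    have hb2 : |y1 x| ≤ ∫ t in Set.uIoc x₀ x, ‖g t‖ := by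
      rw [h1, sub_zero] at hdy1; rw [hdy1]
      simpa using intervalIntegral.norm_integral_le_integral_norm_uIoc (f := g) (a := x₀) (b := x)
    have hmono : (∫ t in Set.uIoc x₀ x, ‖f t‖) + (∫ t in Set.uIoc x₀ x, ‖g t‖)
        ≤ ∫ t in Set.uIoc x₀ x, K t * u t := by
      rw [← MeasureTheory.integral_add ((hfint.mono_set hsub).norm) ((hgint.mono_set hsub).norm)]
      refine setIntegral_mono_on (((hfint.mono_set hsub).norm).add ((hgint.mono_set hsub).norm))
        ((mul_cont_integrableOn hKint hucont).mono_set hsub) measurableSet_uIoc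
        (fun t _ => by simpa [Real.norm_eq_abs] using hptw t)
    calc u x ≤ (∫ t in Set.uIoc x₀ x, ‖f t‖) + (∫ t in Set.uIoc x₀ x, ‖g t‖) :=
          add_le_add hb1 hb2
      _ ≤ _ := hmono
  intro x hx
  have := gronwall_zero hucont hunn hKint hx₀ hineq x hx
  have := abs_nonneg (y x); have := abs_nonneg (y1 x)
  have : |y x| = 0 := by simp only [hudef] at *; linarith
  exact abs_eq_zero.mp this
end

section
variable {a b lam : ℝ} {p q r s y y1 : ℝ → ℝ}

/-- split monotonicity for integrals of nonnegative functions -/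
lemma setInt_split {h : ℝ → ℝ} (hint : IntegrableOn h (Set.Icc a b))
    {l m n : ℝ} (hA : a ≤ l) (h1 : l ≤ m) (h2 : m ≤ n) (hB : n ≤ b) :
    (∫ t in Set.Ioc l m, h t) + (∫ t in Set.Ioc m n, h t) = ∫ t in Set.Ioc l n, h t := by
  rw [← setIntegral_union (Set.Ioc_disjoint_Ioc_of_le le_rfl) measurableSet_Ioc
    (hint.mono_set (fun t ht => ⟨hA.trans ht.1.le, ht.2.trans (h2.trans hB)⟩))
    (hint.mono_set (fun t ht => ⟨(hA.trans h1).trans ht.1.le, ht.2.trans hB⟩)),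
    Set.Ioc_union_Ioc_eq_Ioc h1 h2]

lemma setInt_abs_mono {h : ℝ → ℝ} (hint : IntegrableOn h (Set.Icc a b))
    (hnn : ∀ t, 0 ≤ h t)
    {l m n : ℝ} (hA : a ≤ l) (h1 : l ≤ m) (h2 : m ≤ n) (hB : n ≤ b) :
    (∫ t in Set.Ioc l m, h t) ≤ ∫ t in Set.Ioc l n, h t := by
  have := setInt_split hint hA h1 h2 hB
  have hnn' : 0 ≤ ∫ t in Set.Ioc m n, h t :=
    setIntegral_nonneg measurableSet_Ioc (fun t _ => hnn t)
  linarith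

lemma setInt_abs_mono' {h : ℝ → ℝ} (hint : IntegrableOn h (Set.Icc a b))
    (hnn : ∀ t, 0 ≤ h t)
    {l m n : ℝ} (hA : a ≤ l) (h1 : l ≤ m) (h2 : m ≤ n) (hB : n ≤ b) :
    (∫ t in Set.Ioc m n, h t) ≤ ∫ t in Set.Ioc l n, h t := by
  have := setInt_split hint hA h1 h2 hB
  have hnn' : 0 ≤ ∫ t in Set.Ioc l m, h t :=
    setIntegral_nonneg measurableSet_Ioc (fun t _ => hnn t)
  linarith

lemma setInt_pos_of_ae_pos {h : ℝ → ℝ} {l u : ℝ} (hlu : l < u)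
    (hint : IntegrableOn h (Set.Ioc l u))
    (hpos : ∀ᵐ t ∂(volume.restrict (Set.Ioc l u)), 0 < h t) :
    0 < ∫ t in Set.Ioc l u, h t := by
  rw [MeasureTheory.setIntegral_pos_iff_support_of_nonneg_ae
    (by filter_upwards [hpos] with t ht using ht.le) hint]
  have h1 : (Set.Ioc l u : Set ℝ) ≤ᵐ[volume]
      ((Function.support h ∩ Set.Ioc l u : Set ℝ) : Set ℝ) := by
    have h2 := (ae_restrict_iff' measurableSet_Ioc).mp hpos
    filter_upwards [h2] with t ht
    exact fun hmem => ⟨(ht hmem).ne', hmem⟩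
  calc (0:ENNReal) < volume (Set.Ioc l u) := by
        rw [Real.volume_Ioc]
        exact ENNReal.ofReal_pos.mpr (by linarith)
    _ ≤ _ := measure_mono_ae h1

lemma SLR_pos_right (hab : a < b)
    (hp : IntegrableOn (fun x => 1 / p x) (Set.Ioo a b))
    (hs : IntegrableOn s (Set.Ioo a b))
    (hppos : ∀ᵐ x ∂(volume.restrict (Set.Ioo a b)), 0 < p x)
    (hsol : SLRSolution a b lam p q r s y y1)
    {x₀ x c M : ℝ} (hx₀ : x₀ ∈ Set.Icc a b) (hx : x ∈ Set.Icc a b) (hlt : x₀ < x)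
    (h0 : y x₀ = 0) (hc : 0 < c) (hM : 0 < M) (hMb : ∀ t ∈ Set.Icc a b, |y1 t| ≤ M)
    (hy1lb : ∀ t ∈ Set.Icc x₀ x, c/2 ≤ y1 t)
    (hS1 : (∫ t in Set.Ioc x₀ x, |s t|) ≤ 1/2)
    (hS2 : (∫ t in Set.Ioc x₀ x, |s t|) ≤ c/(8*M)) :
    0 < y x := by
  obtain ⟨hy, hy1, hsol'⟩ := hsol
  set f := fun t => 1 / p t * y1 t - s t * y t with hfdef
  have hfint : IntegrableOn f (Set.Icc a b) := SLR_f_int hp hs ⟨hy, hy1, hsol'⟩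
  have hIcc : Set.Icc x₀ x ⊆ Set.Icc a b := Set.Icc_subset_Icc hx₀.1 hx.2
  have hdiff : ∀ w ∈ Set.Icc x₀ x, y w = ∫ t in Set.Ioc x₀ w, f t := by
    intro w hw
    have := integral_diff_form hfint (fun z hz => (hsol' z hz).1) hx₀ (hIcc hw) hw.1
    rw [h0] at this; linarith
  -- a.e. positivity of 1/p on subintervals
  have hppos' : ∀ᵐ t ∂(volume.restrict (Set.Ioc x₀ x)), 0 < 1 / p t := by
    have h1 : ∀ᵐ t ∂(volume.restrict (Set.Ioo x₀ x)), 0 < p t :=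
      ae_restrict_of_ae_restrict_of_subset
        (Set.Ioo_subset_Ioo hx₀.1 hx.2) hppos
    have h2 : ∀ᵐ t ∂(volume.restrict (Set.Ioc x₀ x)), 0 < p t := by
      rwa [← Measure.restrict_congr_set Ioo_ae_eq_Ioc] 
    filter_upwards [h2] with t ht using one_div_pos.mpr ht
  -- integrabilities on Ioc x₀ x
  have hsubIcc : Set.Ioc x₀ x ⊆ Set.Icc a b := fun t ht =>
    ⟨hx₀.1.trans ht.1.le, ht.2.trans hx.2⟩
  have hpy1 : IntegrableOn (fun t => 1 / p t * y1 t) (Set.Ioc x₀ x) :=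
    (mul_cont_integrableOn hp hy1).mono_set hsubIcc
  have hsy : IntegrableOn (fun t => s t * y t) (Set.Ioc x₀ x) :=
    (mul_cont_integrableOn hs hy).mono_set hsubIcc
  have hpabs : IntegrableOn (fun t => |1 / p t|) (Set.Icc a b) := by
    have : IntegrableOn (fun t => 1 / p t) (Set.Icc a b) := by
      rwa [integrableOn_Icc_iff_integrableOn_Ioo]
    exact this.norm
  have hsabs : IntegrableOn (fun t => |s t|) (Set.Icc a b) := by
    have : IntegrableOn s (Set.Icc a b) := by rwa [integrableOn_Icc_iff_integrableOn_Ioo]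
    exact this.norm
  -- max of |y| on [x₀, x]
  obtain ⟨ξ, hξmem, hξmax⟩ := isCompact_Icc.exists_isMaxOn (Set.nonempty_Icc.mpr hlt.le)
    ((hy.mono hIcc).abs)
  set N := |y ξ| with hNdef
  have hNnn : 0 ≤ N := abs_nonneg _
  have hNb : ∀ t ∈ Set.Icc x₀ x, |y t| ≤ N := fun t ht => hξmax ht
  -- N bound
  set Pa := ∫ t in Set.Ioc x₀ x, |1 / p t| with hPadef
  have hPann : 0 ≤ Pa := setIntegral_nonneg measurableSet_Ioc (fun t _ => abs_nonneg _)
  have hNbound : N ≤ 2 * (M * Pa) := by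
    have e1 : y ξ = ∫ t in Set.Ioc x₀ ξ, f t := hdiff ξ hξmem
    have e2 : N ≤ ∫ t in Set.Ioc x₀ ξ, |f t| := by
      rw [hNdef, e1]
      simpa [Real.norm_eq_abs] using
        MeasureTheory.norm_integral_le_integral_norm (μ := volume.restrict (Set.Ioc x₀ ξ)) f
    have e3 : (∫ t in Set.Ioc x₀ ξ, |f t|)
        ≤ ∫ t in Set.Ioc x₀ ξ, (|1 / p t| * M + |s t| * N) := by
      refine setIntegral_mono_on
        ((hfint.mono_set (fun t ht => ⟨hx₀.1.trans ht.1.le, (ht.2.trans hξmem.2).trans hx.2⟩)).norm)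
        (((hpabs.mono_set (fun t ht => ⟨hx₀.1.trans ht.1.le, (ht.2.trans hξmem.2).trans hx.2⟩)).mul_const M).add
          ((hsabs.mono_set (fun t ht => ⟨hx₀.1.trans ht.1.le, (ht.2.trans hξmem.2).trans hx.2⟩)).mul_const N))
        measurableSet_Ioc (fun t ht => ?_)
      have htx : t ∈ Set.Icc x₀ x := ⟨ht.1.le, ht.2.trans hξmem.2⟩
      have hb1 : |y1 t| ≤ M := hMb t (hIcc htx)
      have hb2 : |y t| ≤ N := hNb t htx
      calc |f t| ≤ |1 / p t| * |y1 t| + |s t| * |y t| :=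
            (abs_sub _ _).trans (by rw [abs_mul, abs_mul])
        _ ≤ |1 / p t| * M + |s t| * N :=
            add_le_add (mul_le_mul_of_nonneg_left hb1 (abs_nonneg _))
              (mul_le_mul_of_nonneg_left hb2 (abs_nonneg _))
    have e4 : (∫ t in Set.Ioc x₀ ξ, (|1 / p t| * M + |s t| * N))
        = (∫ t in Set.Ioc x₀ ξ, |1 / p t|) * M + (∫ t in Set.Ioc x₀ ξ, |s t|) * N := by
      rw [MeasureTheory.integral_add
        ((hpabs.mono_set (fun t ht => ⟨hx₀.1.trans ht.1.le, (ht.2.trans hξmem.2).trans hx.2⟩)).mul_const M)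
        ((hsabs.mono_set (fun t ht => ⟨hx₀.1.trans ht.1.le, (ht.2.trans hξmem.2).trans hx.2⟩)).mul_const N),
        MeasureTheory.integral_mul_const, MeasureTheory.integral_mul_const]
    have e5 : (∫ t in Set.Ioc x₀ ξ, |1 / p t|) ≤ Pa :=
      setInt_abs_mono hpabs (fun t => abs_nonneg _) hx₀.1 hξmem.1 hξmem.2 hx.2
    have e6 : (∫ t in Set.Ioc x₀ ξ, |s t|) ≤ 1/2 :=
      (setInt_abs_mono hsabs (fun t => abs_nonneg _) hx₀.1 hξmem.1 hξmem.2 hx.2).trans hS1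
    have hsn : 0 ≤ ∫ t in Set.Ioc x₀ ξ, |s t| :=
      setIntegral_nonneg measurableSet_Ioc (fun t _ => abs_nonneg _)
    nlinarith [e2.trans (e3.trans_eq e4)]
  -- P positivity
  set P := ∫ t in Set.Ioc x₀ x, (1 / p t) with hPdef
  have hPeq : Pa = P := by
    rw [hPadef, hPdef]
    refine setIntegral_congr_ae measurableSet_Ioc ?_
    filter_upwards [(ae_restrict_iff' measurableSet_Ioc).mp hppos'] with t ht hmem
    exact abs_of_pos (ht hmem)
  have hPpos : 0 < P := by
    rw [hPdef]
    exact setInt_pos_of_ae_pos hlt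
      (((integrableOn_Icc_iff_integrableOn_Ioo).mpr hp).mono_set hsubIcc) hppos'
  -- lower bound for the main term
  have hpIcc : IntegrableOn (fun t => 1 / p t) (Set.Icc a b) := by
    rwa [integrableOn_Icc_iff_integrableOn_Ioo]
  have hI1 : c/2 * P ≤ ∫ t in Set.Ioc x₀ x, 1 / p t * y1 t := by
    have hmono : (∫ t in Set.Ioc x₀ x, 1 / p t * (c/2)) ≤ ∫ t in Set.Ioc x₀ x, 1 / p t * y1 t := by
      refine setIntegral_mono_ae_restrict ((hpIcc.mono_set hsubIcc).mul_const _) hpy1 ?_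
      filter_upwards [hppos', ae_restrict_mem measurableSet_Ioc] with t h1 h2
      exact mul_le_mul_of_nonneg_left (hy1lb t ⟨h2.1.le, h2.2⟩) h1.le
    rw [MeasureTheory.integral_mul_const] at hmono
    rw [← hPdef] at hmono
    linarith
  -- upper bound for the perturbation
  set Sx := ∫ t in Set.Ioc x₀ x, |s t| with hSdef
  have hSnn : 0 ≤ Sx := setIntegral_nonneg measurableSet_Ioc (fun t _ => abs_nonneg _)
  have hI2 : |∫ t in Set.Ioc x₀ x, s t * y t| ≤ N * Sx := by
    have e1 : |∫ t in Set.Ioc x₀ x, s t * y t| ≤ ∫ t in Set.Ioc x₀ x, |s t| * |y t| := by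
      simpa [Real.norm_eq_abs, abs_mul] using
        MeasureTheory.norm_integral_le_integral_norm (μ := volume.restrict (Set.Ioc x₀ x))
          (fun t => s t * y t)
    have e2 : (∫ t in Set.Ioc x₀ x, |s t| * |y t|) ≤ ∫ t in Set.Ioc x₀ x, |s t| * N := by
      refine setIntegral_mono_on
        ((mul_cont_integrableOn hs.norm hy.abs).mono_set hsubIcc)
        ((hsabs.mono_set hsubIcc).mul_const N)
        measurableSet_Ioc (fun t ht => ?_)
      exact mul_le_mul_of_nonneg_left (hNb t ⟨ht.1.le, ht.2⟩) (abs_nonneg _)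
    rw [MeasureTheory.integral_mul_const, ← hSdef] at e2
    linarith [e1.trans e2]
  -- conclude
  have hyx : y x = (∫ t in Set.Ioc x₀ x, 1 / p t * y1 t) - ∫ t in Set.Ioc x₀ x, s t * y t := by
    rw [hdiff x ⟨hlt.le, le_rfl⟩, ← MeasureTheory.integral_sub hpy1 hsy]
  have habs := abs_le.mp hI2
  have hfin : N * Sx ≤ c/4 * Pa := by
    have : N * Sx ≤ 2 * (M * Pa) * Sx := mul_le_mul_of_nonneg_right hNbound hSnn
    have h2 : 2 * (M * Pa) * Sx ≤ 2 * (M * Pa) * (c/(8*M)) :=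
      mul_le_mul_of_nonneg_left hS2 (by positivity)
    have h3 : 2 * (M * Pa) * (c/(8*M)) = c/4 * Pa := by field_simp; ring
    linarith
  rw [hyx]
  rw [hPeq] at hfin
  nlinarith [habs.2, hI1, hfin, hPpos, hc]

lemma SLR_neg_left (hab : a < b)
    (hp : IntegrableOn (fun x => 1 / p x) (Set.Ioo a b))
    (hs : IntegrableOn s (Set.Ioo a b))
    (hppos : ∀ᵐ x ∂(volume.restrict (Set.Ioo a b)), 0 < p x)
    (hsol : SLRSolution a b lam p q r s y y1)
    {x₀ x c M : ℝ} (hx₀ : x₀ ∈ Set.Icc a b) (hx : x ∈ Set.Icc a b) (hlt : x < x₀)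
    (h0 : y x₀ = 0) (hc : 0 < c) (hM : 0 < M) (hMb : ∀ t ∈ Set.Icc a b, |y1 t| ≤ M)
    (hy1lb : ∀ t ∈ Set.Icc x x₀, c/2 ≤ y1 t)
    (hS1 : (∫ t in Set.Ioc x x₀, |s t|) ≤ 1/2)
    (hS2 : (∫ t in Set.Ioc x x₀, |s t|) ≤ c/(8*M)) :
    y x < 0 := by
  obtain ⟨hy, hy1, hsol'⟩ := hsol
  set f := fun t => 1 / p t * y1 t - s t * y t with hfdef
  have hfint : IntegrableOn f (Set.Icc a b) := SLR_f_int hp hs ⟨hy, hy1, hsol'⟩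
  have hIcc : Set.Icc x x₀ ⊆ Set.Icc a b := Set.Icc_subset_Icc hx.1 hx₀.2
  have hdiff : ∀ w ∈ Set.Icc x x₀, y w = -∫ t in Set.Ioc w x₀, f t := by
    intro w hw
    have := integral_diff_form hfint (fun z hz => (hsol' z hz).1) (hIcc hw) hx₀ hw.2
    rw [h0] at this; linarith
  have hppos' : ∀ᵐ t ∂(volume.restrict (Set.Ioc x x₀)), 0 < 1 / p t := by
    have h1 : ∀ᵐ t ∂(volume.restrict (Set.Ioo x x₀)), 0 < p t :=
      ae_restrict_of_ae_restrict_of_subset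
        (Set.Ioo_subset_Ioo hx.1 hx₀.2) hppos
    have h2 : ∀ᵐ t ∂(volume.restrict (Set.Ioc x x₀)), 0 < p t := by
      rwa [← Measure.restrict_congr_set Ioo_ae_eq_Ioc]
    filter_upwards [h2] with t ht using one_div_pos.mpr ht
  have hsubIcc : Set.Ioc x x₀ ⊆ Set.Icc a b := fun t ht =>
    ⟨hx.1.trans ht.1.le, ht.2.trans hx₀.2⟩
  have hpy1 : IntegrableOn (fun t => 1 / p t * y1 t) (Set.Ioc x x₀) :=
    (mul_cont_integrableOn hp hy1).mono_set hsubIcc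
  have hsy : IntegrableOn (fun t => s t * y t) (Set.Ioc x x₀) :=
    (mul_cont_integrableOn hs hy).mono_set hsubIcc
  have hpabs : IntegrableOn (fun t => |1 / p t|) (Set.Icc a b) := by
    have : IntegrableOn (fun t => 1 / p t) (Set.Icc a b) := by
      rwa [integrableOn_Icc_iff_integrableOn_Ioo]
    exact this.norm
  have hsabs : IntegrableOn (fun t => |s t|) (Set.Icc a b) := by
    have : IntegrableOn s (Set.Icc a b) := by rwa [integrableOn_Icc_iff_integrableOn_Ioo]
    exact this.norm
  obtain ⟨ξ, hξmem, hξmax⟩ := isCompact_Icc.exists_isMaxOn (Set.nonempty_Icc.mpr hlt.le)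
    ((hy.mono hIcc).abs)
  set N := |y ξ| with hNdef
  have hNnn : 0 ≤ N := abs_nonneg _
  have hNb : ∀ t ∈ Set.Icc x x₀, |y t| ≤ N := fun t ht => hξmax ht
  set Pa := ∫ t in Set.Ioc x x₀, |1 / p t| with hPadef
  have hPann : 0 ≤ Pa := setIntegral_nonneg measurableSet_Ioc (fun t _ => abs_nonneg _)
  have hNbound : N ≤ 2 * (M * Pa) := by
    have e1 : y ξ = -∫ t in Set.Ioc ξ x₀, f t := hdiff ξ hξmem
    have e2 : N ≤ ∫ t in Set.Ioc ξ x₀, |f t| := by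
      rw [hNdef, e1, abs_neg]
      simpa [Real.norm_eq_abs] using
        MeasureTheory.norm_integral_le_integral_norm (μ := volume.restrict (Set.Ioc ξ x₀)) f
    have e3 : (∫ t in Set.Ioc ξ x₀, |f t|)
        ≤ ∫ t in Set.Ioc ξ x₀, (|1 / p t| * M + |s t| * N) := by
      refine setIntegral_mono_on
        ((hfint.mono_set (fun t ht => ⟨(hx.1.trans hξmem.1).trans ht.1.le, ht.2.trans hx₀.2⟩)).norm)
        (((hpabs.mono_set (fun t ht => ⟨(hx.1.trans hξmem.1).trans ht.1.le, ht.2.trans hx₀.2⟩)).mul_const M).add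
          ((hsabs.mono_set (fun t ht => ⟨(hx.1.trans hξmem.1).trans ht.1.le, ht.2.trans hx₀.2⟩)).mul_const N))
        measurableSet_Ioc (fun t ht => ?_)
      have htx : t ∈ Set.Icc x x₀ := ⟨hξmem.1.trans ht.1.le, ht.2⟩
      have hb1 : |y1 t| ≤ M := hMb t (hIcc htx)
      have hb2 : |y t| ≤ N := hNb t htx
      calc |f t| ≤ |1 / p t| * |y1 t| + |s t| * |y t| :=
            (abs_sub _ _).trans (by rw [abs_mul, abs_mul])
        _ ≤ |1 / p t| * M + |s t| * N :=
            add_le_add (mul_le_mul_of_nonneg_left hb1 (abs_nonneg _))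
              (mul_le_mul_of_nonneg_left hb2 (abs_nonneg _))
    have e4 : (∫ t in Set.Ioc ξ x₀, (|1 / p t| * M + |s t| * N))
        = (∫ t in Set.Ioc ξ x₀, |1 / p t|) * M + (∫ t in Set.Ioc ξ x₀, |s t|) * N := by
      rw [MeasureTheory.integral_add
        ((hpabs.mono_set (fun t ht => ⟨(hx.1.trans hξmem.1).trans ht.1.le, ht.2.trans hx₀.2⟩)).mul_const M)
        ((hsabs.mono_set (fun t ht => ⟨(hx.1.trans hξmem.1).trans ht.1.le, ht.2.trans hx₀.2⟩)).mul_const N),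
        MeasureTheory.integral_mul_const, MeasureTheory.integral_mul_const]
    have e5 : (∫ t in Set.Ioc ξ x₀, |1 / p t|) ≤ Pa :=
      setInt_abs_mono' hpabs (fun t => abs_nonneg _) hx.1 hξmem.1 hξmem.2 hx₀.2
    have e6 : (∫ t in Set.Ioc ξ x₀, |s t|) ≤ 1/2 :=
      (setInt_abs_mono' hsabs (fun t => abs_nonneg _) hx.1 hξmem.1 hξmem.2 hx₀.2).trans hS1
    have hsn : 0 ≤ ∫ t in Set.Ioc ξ x₀, |s t| :=
      setIntegral_nonneg measurableSet_Ioc (fun t _ => abs_nonneg _)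
    nlinarith [e2.trans (e3.trans_eq e4)]
  set P := ∫ t in Set.Ioc x x₀, (1 / p t) with hPdef
  have hPeq : Pa = P := by
    rw [hPadef, hPdef]
    refine setIntegral_congr_ae measurableSet_Ioc ?_
    filter_upwards [(ae_restrict_iff' measurableSet_Ioc).mp hppos'] with t ht hmem
    exact abs_of_pos (ht hmem)
  have hPpos : 0 < P := by
    rw [hPdef]
    exact setInt_pos_of_ae_pos hlt
      (((integrableOn_Icc_iff_integrableOn_Ioo).mpr hp).mono_set hsubIcc) hppos'
  have hpIcc : IntegrableOn (fun t => 1 / p t) (Set.Icc a b) := by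
    rwa [integrableOn_Icc_iff_integrableOn_Ioo]
  have hI1 : c/2 * P ≤ ∫ t in Set.Ioc x x₀, 1 / p t * y1 t := by
    have hmono : (∫ t in Set.Ioc x x₀, 1 / p t * (c/2)) ≤ ∫ t in Set.Ioc x x₀, 1 / p t * y1 t := by
      refine setIntegral_mono_ae_restrict ((hpIcc.mono_set hsubIcc).mul_const _) hpy1 ?_
      filter_upwards [hppos', ae_restrict_mem measurableSet_Ioc] with t h1 h2
      exact mul_le_mul_of_nonneg_left (hy1lb t ⟨h2.1.le, h2.2⟩) h1.le
    rw [MeasureTheory.integral_mul_const] at hmono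
    rw [← hPdef] at hmono
    linarith
  set Sx := ∫ t in Set.Ioc x x₀, |s t| with hSdef
  have hSnn : 0 ≤ Sx := setIntegral_nonneg measurableSet_Ioc (fun t _ => abs_nonneg _)
  have hI2 : |∫ t in Set.Ioc x x₀, s t * y t| ≤ N * Sx := by
    have e1 : |∫ t in Set.Ioc x x₀, s t * y t| ≤ ∫ t in Set.Ioc x x₀, |s t| * |y t| := by
      simpa [Real.norm_eq_abs, abs_mul] using
        MeasureTheory.norm_integral_le_integral_norm (μ := volume.restrict (Set.Ioc x x₀))
          (fun t => s t * y t)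
    have e2 : (∫ t in Set.Ioc x x₀, |s t| * |y t|) ≤ ∫ t in Set.Ioc x x₀, |s t| * N := by
      refine setIntegral_mono_on
        ((mul_cont_integrableOn hs.norm hy.abs).mono_set hsubIcc)
        ((hsabs.mono_set hsubIcc).mul_const N)
        measurableSet_Ioc (fun t ht => ?_)
      exact mul_le_mul_of_nonneg_left (hNb t ⟨ht.1.le, ht.2⟩) (abs_nonneg _)
    rw [MeasureTheory.integral_mul_const, ← hSdef] at e2
    linarith [e1.trans e2]
  have hyx : y x = -((∫ t in Set.Ioc x x₀, 1 / p t * y1 t) - ∫ t in Set.Ioc x x₀, s t * y t) := by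
    rw [hdiff x ⟨le_rfl, hlt.le⟩, ← MeasureTheory.integral_sub hpy1 hsy]
  have habs := abs_le.mp hI2
  have hfin : N * Sx ≤ c/4 * Pa := by
    have : N * Sx ≤ 2 * (M * Pa) * Sx := mul_le_mul_of_nonneg_right hNbound hSnn
    have h2 : 2 * (M * Pa) * Sx ≤ 2 * (M * Pa) * (c/(8*M)) :=
      mul_le_mul_of_nonneg_left hS2 (by positivity)
    have h3 : 2 * (M * Pa) * (c/(8*M)) = c/4 * Pa := by field_simp; ring
    linarith
  rw [hyx]
  rw [hPeq] at hfin
  nlinarith [habs.1, hI1, hfin, hPpos, hc]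

lemma SLR_sign_change (hab : a < b)
    (hp : IntegrableOn (fun x => 1 / p x) (Set.Ioo a b))
    (hs : IntegrableOn s (Set.Ioo a b))
    (hppos : ∀ᵐ x ∂(volume.restrict (Set.Ioo a b)), 0 < p x)
    (hsol : SLRSolution a b lam p q r s y y1)
    {x₀ : ℝ} (hx₀ : x₀ ∈ Set.Icc a b) (h0 : y x₀ = 0) (h1 : 0 < y1 x₀) :
    ∃ δ > 0, (∀ x ∈ Set.Icc a b, x₀ < x → x < x₀ + δ → 0 < y x) ∧
      (∀ x ∈ Set.Icc a b, x₀ - δ < x → x < x₀ → y x < 0) := by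
  obtain ⟨hy, hy1, hsol'⟩ := hsol
  set c := y1 x₀ with hcdef
  obtain ⟨M0, hM0⟩ := isCompact_Icc.exists_bound_of_continuousOn hy1
  set M := max M0 1 with hMdef
  have hM : 0 < M := lt_of_lt_of_le one_pos (le_max_right _ _)
  have hMb : ∀ t ∈ Set.Icc a b, |y1 t| ≤ M := fun t ht =>
    (by simpa [Real.norm_eq_abs] using hM0 t ht : |y1 t| ≤ M0).trans (le_max_left _ _)
  -- δ1 from continuity of y1
  have hy1c := hy1 x₀ hx₀
  rw [Metric.continuousWithinAt_iff] at hy1c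
  obtain ⟨δ1, hδ1pos, hδ1⟩ := hy1c (c/2) (by linarith)
  have hy1lb : ∀ t ∈ Set.Icc a b, dist t x₀ < δ1 → c/2 ≤ y1 t := by
    intro t ht hd
    have := hδ1 ht hd
    rw [Real.dist_eq] at this
    have := abs_lt.mp this
    rw [← hcdef] at *
    linarith [this.1]
  -- δ2 from continuity of the primitive of |s|
  have hsabs : IntegrableOn (fun t => |s t|) (Set.Icc a b) := by
    have : IntegrableOn s (Set.Icc a b) := by rwa [integrableOn_Icc_iff_integrableOn_Ioo]
    exact this.norm
  set Gs := fun x => ∫ t in Set.Ioc a x, |s t| with hGsdef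
  have hGscont : ContinuousOn Gs (Set.Icc a b) := continuousOn_primitive hsabs
  set ε := min (1/2 : ℝ) (c/(8*M)) with hεdef
  have hεpos : 0 < ε := lt_min (by norm_num) (by positivity)
  have hGsc := hGscont x₀ hx₀
  rw [Metric.continuousWithinAt_iff] at hGsc
  obtain ⟨δ2, hδ2pos, hδ2⟩ := hGsc ε hεpos
  set δ := min δ1 δ2 with hδdef
  have hδpos : 0 < δ := lt_min hδ1pos hδ2pos
  have hGsl : ∀ {l u : ℝ}, a ≤ l → l ≤ u → u ≤ b →
      (∫ t in Set.Ioc l u, |s t|) = Gs u - Gs l := by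
    intro l u h1' h2' h3'
    have := setInt_split hsabs (le_refl a) h1' h2' h3' (l := a) (m := l) (n := u)
    simp only [hGsdef]; linarith
  refine ⟨δ, hδpos, ?_, ?_⟩
  · intro x hx hlt hup
    have hSeq : (∫ t in Set.Ioc x₀ x, |s t|) = Gs x - Gs x₀ := hGsl hx₀.1 hlt.le hx.2
    have hdists : dist x x₀ < δ2 := by
      rw [Real.dist_eq, abs_lt]
      constructor <;> [linarith; linarith [min_le_right δ1 δ2]]
    have hGb := hδ2 hx hdists
    rw [Real.dist_eq] at hGb
    have hGb' := abs_lt.mp hGb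
    have hS : (∫ t in Set.Ioc x₀ x, |s t|) ≤ ε := by
      rw [hSeq]; linarith [hGb'.2]
    refine SLR_pos_right hab hp hs hppos ⟨hy, hy1, hsol'⟩ hx₀ hx hlt h0 h1 hM hMb ?_
      (hS.trans (min_le_left _ _)) (hS.trans (min_le_right _ _))
    intro t ht
    refine hy1lb t (⟨hx₀.1.trans ht.1, ht.2.trans hx.2⟩) ?_
    rw [Real.dist_eq, abs_lt]
    constructor
    · linarith [ht.1, min_le_left δ1 δ2]
    · have : t ≤ x := ht.2
      linarith [min_le_left δ1 δ2]
  · intro x hx hlo hltx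
    have hSeq : (∫ t in Set.Ioc x x₀, |s t|) = Gs x₀ - Gs x := hGsl hx.1 hltx.le hx₀.2
    have hdists : dist x x₀ < δ2 := by
      rw [Real.dist_eq, abs_lt]
      constructor <;> [linarith [min_le_right δ1 δ2]; linarith]
    have hGb := hδ2 hx hdists
    rw [Real.dist_eq] at hGb
    have hGb' := abs_lt.mp hGb
    have hS : (∫ t in Set.Ioc x x₀, |s t|) ≤ ε := by
      rw [hSeq]; linarith [hGb'.1]
    refine SLR_neg_left hab hp hs hppos ⟨hy, hy1, hsol'⟩ hx₀ hx hltx h0 h1 hM hMb ?_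
      (hS.trans (min_le_left _ _)) (hS.trans (min_le_right _ _))
    intro t ht
    refine hy1lb t (⟨hx.1.trans ht.1, ht.2.trans hx₀.2⟩) ?_
    rw [Real.dist_eq, abs_lt]
    constructor
    · linarith [ht.1, min_le_left δ1 δ2]
    · linarith [ht.2, min_le_left δ1 δ2]
end

section
variable {a b lamD lam₀ : ℝ} {p q r s Y Y1 y y1 : ℝ → ℝ}

lemma SLR_neg {lam : ℝ} {y y1 : ℝ → ℝ} (hsol : SLRSolution a b lam p q r s y y1) :
    SLRSolution a b lam p q r s (fun x => -y x) (fun x => -y1 x) := by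
  obtain ⟨hy, hy1, hsol'⟩ := hsol
  refine ⟨hy.neg, hy1.neg, fun x hx => ⟨?_, ?_⟩⟩
  · have h := (hsol' x hx).1
    have e : (∫ t in a..x, (1 / p t * (-y1 t) - s t * (-y t)))
        = -∫ t in a..x, (1 / p t * y1 t - s t * y t) := by
      rw [← intervalIntegral.integral_neg]
      congr 1; funext t; ring
    show -y x = -y a + _
    rw [e]; linarith
  · have h := (hsol' x hx).2
    have e : (∫ t in a..x, (s t * (-y1 t) + (q t - lam * r t) * (-y t)))
        = -∫ t in a..x, (s t * y1 t + (q t - lam * r t) * y t) := by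
      rw [← intervalIntegral.integral_neg]
      congr 1; funext t; ring
    show -y1 x = -y1 a + _
    rw [e]; linarith

lemma wronskian_diff
    (hp : IntegrableOn (fun x => 1 / p x) (Set.Ioo a b))
    (hq : IntegrableOn q (Set.Ioo a b)) (hr : IntegrableOn r (Set.Ioo a b))
    (hs : IntegrableOn s (Set.Ioo a b))
    (hY : SLRSolution a b lamD p q r s Y Y1)
    (hy : SLRSolution a b lam₀ p q r s y y1)
    {x₁ x₂ : ℝ} (h₁ : x₁ ∈ Set.Icc a b) (h₂ : x₂ ∈ Set.Icc a b) (h12 : x₁ ≤ x₂) :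
    (y x₂ * Y1 x₂ - Y x₂ * y1 x₂) - (y x₁ * Y1 x₁ - Y x₁ * y1 x₁)
      = (lam₀ - lamD) * ∫ t in Set.Ioc x₁ x₂, r t * (y t * Y t) := by
  set fy := fun t => 1 / p t * y1 t - s t * y t with hfy
  set gy := fun t => s t * y1 t + (q t - lam₀ * r t) * y t with hgy
  set fY := fun t => 1 / p t * Y1 t - s t * Y t with hfY
  set gY := fun t => s t * Y1 t + (q t - lamD * r t) * Y t with hgY
  have hfyi : IntegrableOn fy (Set.Icc a b) := SLR_f_int hp hs hy
  have hgyi : IntegrableOn gy (Set.Icc a b) := SLR_g_int hq hr hs hy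
  have hfYi : IntegrableOn fY (Set.Icc a b) := SLR_f_int hp hs hY
  have hgYi : IntegrableOn gY (Set.Icc a b) := SLR_g_int hq hr hs hY
  have hsub : Set.Ioc x₁ x₂ ⊆ Set.Icc a b := fun t ht =>
    ⟨h₁.1.trans ht.1.le, ht.2.trans h₂.2⟩
  have hsub' : Set.Icc x₁ x₂ ⊆ Set.Icc a b := Set.Icc_subset_Icc h₁.1 h₂.2
  have hdy : ∀ x ∈ Set.Icc x₁ x₂, y x = y x₁ + ∫ t in Set.Ioc x₁ x, fy t := fun x hx =>
    integral_diff_form hfyi (fun z hz => (hy.2.2 z hz).1) h₁ (hsub' hx) hx.1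
  have hdY1 : ∀ x ∈ Set.Icc x₁ x₂, Y1 x = Y1 x₁ + ∫ t in Set.Ioc x₁ x, gY t := fun x hx =>
    integral_diff_form hgYi (fun z hz => (hY.2.2 z hz).2) h₁ (hsub' hx) hx.1
  have hdY : ∀ x ∈ Set.Icc x₁ x₂, Y x = Y x₁ + ∫ t in Set.Ioc x₁ x, fY t := fun x hx =>
    integral_diff_form hfYi (fun z hz => (hY.2.2 z hz).1) h₁ (hsub' hx) hx.1
  have hdy1 : ∀ x ∈ Set.Icc x₁ x₂, y1 x = y1 x₁ + ∫ t in Set.Ioc x₁ x, gy t := fun x hx =>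
    integral_diff_form hgyi (fun z hz => (hy.2.2 z hz).2) h₁ (hsub' hx) hx.1
  have hP1 := prod_rule h12 (hfyi.mono_set hsub) (hgYi.mono_set hsub) hdy hdY1
  have hP2 := prod_rule h12 (hfYi.mono_set hsub) (hgyi.mono_set hsub) hdY hdy1
  -- integrabilities of the integrands
  have hA1 : IntegrableOn (fun t => fy t * Y1 t) (Set.Icc a b) :=
    mul_cont_integrableOn (hfyi.mono_set Set.Ioo_subset_Icc_self) hY.2.1
  have hB1 : IntegrableOn (fun t => y t * gY t) (Set.Icc a b) :=
    (mul_cont_integrableOn (hgYi.mono_set Set.Ioo_subset_Icc_self) hy.1).congr_fun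
      (fun t _ => mul_comm (gY t) (y t)) measurableSet_Icc
  have hC1 : IntegrableOn (fun t => fy t * Y1 t + y t * gY t) (Set.Icc a b) := hA1.add hB1
  have hi1 : IntegrableOn (fun t => fy t * Y1 t + y t * gY t) (Set.Ioc x₁ x₂) :=
    hC1.mono_set hsub
  have hA2 : IntegrableOn (fun t => fY t * y1 t) (Set.Icc a b) :=
    mul_cont_integrableOn (hfYi.mono_set Set.Ioo_subset_Icc_self) hy.2.1
  have hB2 : IntegrableOn (fun t => Y t * gy t) (Set.Icc a b) :=
    (mul_cont_integrableOn (hgyi.mono_set Set.Ioo_subset_Icc_self) hY.1).congr_fun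
      (fun t _ => mul_comm (gy t) (Y t)) measurableSet_Icc
  have hC2 : IntegrableOn (fun t => fY t * y1 t + Y t * gy t) (Set.Icc a b) := hA2.add hB2
  have hi2 : IntegrableOn (fun t => fY t * y1 t + Y t * gy t) (Set.Ioc x₁ x₂) :=
    hC2.mono_set hsub
  have e : (∫ t in Set.Ioc x₁ x₂, (fy t * Y1 t + y t * gY t))
      - (∫ t in Set.Ioc x₁ x₂, (fY t * y1 t + Y t * gy t))
      = ∫ t in Set.Ioc x₁ x₂, (lam₀ - lamD) * (r t * (y t * Y t)) := by
    rw [← MeasureTheory.integral_sub hi1 hi2]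
    refine setIntegral_congr_fun measurableSet_Ioc (fun t _ => ?_)
    simp only [hfy, hgy, hfY, hgY]
    ring
  rw [MeasureTheory.integral_const_mul] at e
  rw [hP1, hP2]
  linarith
end

section
variable {a b lamD lam₀ k11 : ℝ} {p q r s Y Y1 ψ ψ1 : ℝ → ℝ}

lemma noTwoZeros (hab : a < b)
    (hp : IntegrableOn (fun x => 1 / p x) (Set.Ioo a b))
    (hq : IntegrableOn q (Set.Ioo a b)) (hr : IntegrableOn r (Set.Ioo a b))
    (hs : IntegrableOn s (Set.Ioo a b))
    (hppos : ∀ᵐ x ∂(volume.restrict (Set.Ioo a b)), 0 < p x)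
    (hrpos : ∀ᵐ x ∂(volume.restrict (Set.Ioo a b)), 0 < r x)
    (hY : SLRSolution a b lamD p q r s Y Y1) (hYa : Y a = 0) (hYb : Y b = 0)
    (hYpos : ∀ x ∈ Set.Ioo a b, 0 < Y x)
    (hlt : lam₀ < lamD)
    (hψ : SLRSolution a b lam₀ p q r s ψ ψ1)
    {x₁ x₂ : ℝ} (h₁ : x₁ ∈ Set.Icc a b) (h₂ : x₂ ∈ Set.Icc a b) (h12 : x₁ < x₂)
    (hz1 : ψ x₁ = 0) (hz2 : ψ x₂ = 0) (h1pos : 0 < ψ1 x₁) : False := by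
  obtain ⟨δ, hδpos, hδr, hδl⟩ := SLR_sign_change hab hp hs hppos hψ h₁ hz1 h1pos
  set Z := {x : ℝ | x ∈ Set.Icc a b ∧ x₁ < x ∧ ψ x = 0} with hZdef
  have hZmem : x₂ ∈ Z := ⟨h₂, h12, hz2⟩
  have hZne : Z.Nonempty := ⟨x₂, hZmem⟩
  have hZbdd : BddBelow Z := ⟨x₁, fun z hz => hz.2.1.le⟩
  have hZlb : ∀ z ∈ Z, x₁ + δ ≤ z := by
    intro z hz
    by_contra hlt'
    push_neg at hlt'
    exact absurd hz.2.2 (hδr z hz.1 hz.2.1 hlt').ne'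
  set c := sInf Z with hcdef
  have hcge : x₁ + δ ≤ c := le_csInf hZne hZlb
  have hcgt : x₁ < c := by linarith
  have hcle : c ≤ x₂ := csInf_le hZbdd hZmem
  have hcab : c ∈ Set.Icc a b := ⟨h₁.1.trans hcgt.le, hcle.trans h₂.2⟩
  have hψc : ψ c = 0 := by
    by_contra hne
    have hpos := abs_pos.mpr hne
    have hcw := hψ.1 c hcab
    rw [Metric.continuousWithinAt_iff] at hcw
    obtain ⟨δ', hδ'pos, hδ'⟩ := hcw (|ψ c|) hpos
    obtain ⟨z, hzZ, hzlt⟩ := (csInf_lt_iff hZbdd hZne).mp (lt_add_of_pos_right c hδ'pos)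
    have hzc : c ≤ z := csInf_le hZbdd hzZ
    have hdist : dist z c < δ' := by rw [Real.dist_eq, abs_lt]; constructor <;> linarith
    have := hδ' hzZ.1 hdist
    rw [hzZ.2.2, Real.dist_eq, zero_sub, abs_neg] at this
    exact lt_irrefl _ this
  have hnozero : ∀ w, x₁ < w → w < c → ψ w ≠ 0 := by
    intro w hw1 hw2 hzw
    have hwab : w ∈ Set.Icc a b := ⟨h₁.1.trans hw1.le, (hw2.le.trans hcab.2)⟩
    exact absurd (csInf_le hZbdd ⟨hwab, hw1, hzw⟩) (not_le.mpr hw2)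
  have hpos_on : ∀ w, x₁ < w → w < c → 0 < ψ w := by
    intro w hw1 hw2
    have hwab : w ∈ Set.Icc a b := ⟨h₁.1.trans hw1.le, (hw2.le.trans hcab.2)⟩
    rcases lt_trichotomy (ψ w) 0 with hneg | h0 | hposw
    · exfalso
      set v := x₁ + (min δ (w - x₁))/2 with hvdef
      have hmin : 0 < min δ (w - x₁) := lt_min hδpos (by linarith)
      have hv1 : x₁ < v := by simp only [hvdef]; linarith
      have hv2 : v < x₁ + δ := by
        have := min_le_left δ (w - x₁); simp only [hvdef]; linarith
      have hv3 : v < w := by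
        have := min_le_right δ (w - x₁); simp only [hvdef]; linarith
      have hvab : v ∈ Set.Icc a b := ⟨h₁.1.trans hv1.le, (hv3.le.trans hwab.2)⟩
      have hψv : 0 < ψ v := hδr v hvab hv1 hv2
      have hivt := intermediate_value_Icc' hv3.le
        (hψ.1.mono (Set.Icc_subset_Icc hvab.1 hwab.2))
      obtain ⟨z, hz, hz0⟩ := hivt ⟨hneg.le, hψv.le⟩
      exact hnozero z (hv1.trans_le hz.1) (lt_of_le_of_lt hz.2 hw2) hz0
    · exact absurd h0 (hnozero w hw1 hw2)
    · exact hposw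
  have hψ1c : ψ1 c ≤ 0 := by
    by_contra hgt
    push_neg at hgt
    obtain ⟨δ₂, hδ₂pos, _, hδ₂l⟩ := SLR_sign_change hab hp hs hppos hψ hcab hψc hgt
    set w := max ((x₁ + c)/2) (c - δ₂/2) with hwdef
    have hwc : w < c := max_lt (by linarith) (by linarith)
    have hwx₁ : x₁ < w := lt_of_lt_of_le (by linarith : x₁ < (x₁ + c)/2) (le_max_left _ _)
    have hwlo : c - δ₂ < w := lt_of_lt_of_le (by linarith) (le_max_right _ _)
    have hwab : w ∈ Set.Icc a b := ⟨h₁.1.trans hwx₁.le, hwc.le.trans hcab.2⟩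
    exact absurd (hpos_on w hwx₁ hwc) (not_lt.mpr (hδ₂l w hwab hwlo hwc).le)
  have hYx₁ : 0 ≤ Y x₁ := by
    rcases eq_or_lt_of_le h₁.1 with heq | hlt'
    · rw [← heq, hYa]
    · exact (hYpos x₁ ⟨hlt', h12.trans_le h₂.2⟩).le
  have hYc : 0 ≤ Y c := by
    rcases eq_or_lt_of_le hcab.2 with heq | hlt'
    · rw [heq, hYb]
    · exact (hYpos c ⟨h₁.1.trans_lt hcgt, hlt'⟩).le
  have hIpos : 0 < ∫ t in Set.Ioc x₁ c, r t * (ψ t * Y t) := by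
    refine setInt_pos_of_ae_pos hcgt
      ((mul_cont_integrableOn hr (hψ.1.mul hY.1)).mono_set
        (fun t ht => ⟨h₁.1.trans ht.1.le, ht.2.trans hcab.2⟩)) ?_
    have h1 : ∀ᵐ t ∂(volume.restrict (Set.Ioo x₁ c)), 0 < r t :=
      ae_restrict_of_ae_restrict_of_subset (Set.Ioo_subset_Ioo h₁.1 hcab.2) hrpos
    have h2 : ∀ᵐ t ∂(volume.restrict (Set.Ioo x₁ c)), 0 < r t * (ψ t * Y t) := by
      filter_upwards [h1, ae_restrict_mem measurableSet_Ioo] with t ht hm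
      exact mul_pos ht (mul_pos (hpos_on t hm.1 hm.2)
        (hYpos t ⟨h₁.1.trans_lt hm.1, hm.2.trans_le hcab.2⟩))
    rwa [Measure.restrict_congr_set Ioo_ae_eq_Ioc] at h2
  have hW := wronskian_diff hp hq hr hs hY hψ h₁ hcab hcgt.le
  rw [hz1, hψc] at hW
  have hneg : (lam₀ - lamD) * ∫ t in Set.Ioc x₁ c, r t * (ψ t * Y t) < 0 :=
    mul_neg_of_neg_of_pos (by linarith) hIpos
  nlinarith [mul_nonneg hYc (neg_nonneg.mpr hψ1c), mul_nonneg hYx₁ h1pos.le]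

lemma lastStep (hab : a < b)
    (hp : IntegrableOn (fun x => 1 / p x) (Set.Ioo a b))
    (hs : IntegrableOn s (Set.Ioo a b))
    (hppos : ∀ᵐ x ∂(volume.restrict (Set.Ioo a b)), 0 < p x)
    {φ φ1 : ℝ → ℝ}
    (hφ : SLRSolution a b lam₀ p q r s φ φ1)
    (hbc : φ b = k11 * φ a) (hk11 : 0 < k11)
    (hAMO : ∀ x₁ ∈ Set.Icc a b, ∀ x₂ ∈ Set.Icc a b, φ x₁ = 0 → φ x₂ = 0 → x₁ = x₂)
    {x₀ : ℝ} (hx₀ : x₀ ∈ Set.Ioo a b) (h0 : φ x₀ = 0) (h1 : 0 < φ1 x₀) : False := by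
  have hx₀' : x₀ ∈ Set.Icc a b := ⟨hx₀.1.le, hx₀.2.le⟩
  obtain ⟨δ, hδpos, hδr, hδl⟩ := SLR_sign_change hab hp hs hppos hφ hx₀' h0 h1
  set xl := max ((a + x₀)/2) (x₀ - δ/2) with hxl
  have hal : a < xl := lt_of_lt_of_le (by linarith [hx₀.1] : a < (a + x₀)/2) (le_max_left _ _)
  have hlx : xl < x₀ := max_lt (by linarith [hx₀.1]) (by linarith)
  have hlg : x₀ - δ < xl := lt_of_lt_of_le (by linarith) (le_max_right _ _)
  have hlab : xl ∈ Set.Icc a b := ⟨hal.le, hlx.le.trans hx₀.2.le⟩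
  have hφl : φ xl < 0 := hδl xl hlab hlg hlx
  set xr := min ((x₀ + b)/2) (x₀ + δ/2) with hxr
  have hrb : xr < b := lt_of_le_of_lt (min_le_left _ _) (by linarith [hx₀.2])
  have hrx : x₀ < xr := lt_min (by linarith [hx₀.2]) (by linarith)
  have hrg : xr < x₀ + δ := lt_of_le_of_lt (min_le_right _ _) (by linarith)
  have hrab : xr ∈ Set.Icc a b := ⟨hx₀.1.le.trans hrx.le, hrb.le⟩
  have hφr : 0 < φ xr := hδr xr hrab hrx hrg
  have haab : a ∈ Set.Icc a b := ⟨le_rfl, hab.le⟩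
  have hbab : b ∈ Set.Icc a b := ⟨hab.le, le_rfl⟩
  have hφa_ne : φ a ≠ 0 := fun h =>
    (hx₀.1.ne) (hAMO a haab x₀ hx₀' h h0)
  have hφb_ne : φ b ≠ 0 := fun h =>
    (hx₀.2.ne') (hAMO b hbab x₀ hx₀' h h0)
  have hφa_neg : φ a < 0 := by
    rcases hφa_ne.lt_or_gt with h | h
    · exact h
    · exfalso
      have hivt := intermediate_value_Icc' hal.le (hφ.1.mono (Set.Icc_subset_Icc le_rfl hlab.2))
      obtain ⟨z, hz, hz0⟩ := hivt ⟨hφl.le, h.le⟩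
      have hzab : z ∈ Set.Icc a b := ⟨hz.1, hz.2.trans hlab.2⟩
      have := hAMO z hzab x₀ hx₀' hz0 h0
      exact absurd this (by intro heq; rw [heq] at hz; linarith [hz.2])
  have hφb_pos : 0 < φ b := by
    rcases hφb_ne.lt_or_gt with h | h
    · exfalso
      have hivt := intermediate_value_Icc' hrb.le (hφ.1.mono (Set.Icc_subset_Icc hrab.1 le_rfl))
      obtain ⟨z, hz, hz0⟩ := hivt ⟨h.le, hφr.le⟩
      have hzab : z ∈ Set.Icc a b := ⟨hrab.1.trans hz.1, hz.2⟩
      have := hAMO z hzab x₀ hx₀' hz0 h0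
      exact absurd this (by intro heq; rw [heq] at hz; linarith [hz.1])
    · exact h
  nlinarith [hbc, mul_pos hk11 (neg_pos.mpr hφa_neg)]

lemma mainCore (hab : a < b)
    (hp : IntegrableOn (fun x => 1 / p x) (Set.Ioo a b))
    (hq : IntegrableOn q (Set.Ioo a b)) (hr : IntegrableOn r (Set.Ioo a b))
    (hs : IntegrableOn s (Set.Ioo a b))
    (hppos : ∀ᵐ x ∂(volume.restrict (Set.Ioo a b)), 0 < p x)
    (hrpos : ∀ᵐ x ∂(volume.restrict (Set.Ioo a b)), 0 < r x)
    (hY : SLRSolution a b lamD p q r s Y Y1) (hYa : Y a = 0) (hYb : Y b = 0)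
    (hYpos : ∀ x ∈ Set.Ioo a b, 0 < Y x)
    (hk11 : 0 < k11) (hlt : lam₀ < lamD)
    (hψ : SLRSolution a b lam₀ p q r s ψ ψ1)
    (hbc : ψ b = k11 * ψ a)
    (hψnt : ∃ x ∈ Set.Icc a b, ψ x ≠ 0) :
    ∀ x ∈ Set.Icc a b, ψ x ≠ 0 := by
  have hψ1ne : ∀ x ∈ Set.Icc a b, ψ x = 0 → ψ1 x ≠ 0 := by
    intro x hx hzx h1x
    obtain ⟨w, hw, hwne⟩ := hψnt
    exact hwne (SLR_unique hp hq hr hs hψ hx hzx h1x w hw)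
  have hAMO : ∀ x₁ ∈ Set.Icc a b, ∀ x₂ ∈ Set.Icc a b, ψ x₁ = 0 → ψ x₂ = 0 → x₁ = x₂ := by
    intro x₁ hx₁ x₂ hx₂ hz1 hz2
    by_contra hne
    have key : ∀ u₁ ∈ Set.Icc a b, ∀ u₂ ∈ Set.Icc a b, u₁ < u₂ →
        ψ u₁ = 0 → ψ u₂ = 0 → False := by
      intro u₁ hu₁ u₂ hu₂ h12 hzu1 hzu2
      rcases (hψ1ne u₁ hu₁ hzu1).lt_or_gt with hneg | hpos
      · exact noTwoZeros hab hp hq hr hs hppos hrpos hY hYa hYb hYpos hlt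
          (SLR_neg hψ) hu₁ hu₂ h12 (by simp [hzu1]) (by simp [hzu2])
          (by simpa using neg_pos.mpr hneg)
      · exact noTwoZeros hab hp hq hr hs hppos hrpos hY hYa hYb hYpos hlt
          hψ hu₁ hu₂ h12 hzu1 hzu2 hpos
    rcases Ne.lt_or_gt hne with h12 | h21
    · exact key x₁ hx₁ x₂ hx₂ h12 hz1 hz2
    · exact key x₂ hx₂ x₁ hx₁ h21 hz2 hz1
  intro x₀ hx₀ h0
  have hψa : ψ a ≠ 0 := by
    intro h
    have hb0 : ψ b = 0 := by rw [hbc, h, mul_zero]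
    exact hab.ne (hAMO a ⟨le_rfl, hab.le⟩ b ⟨hab.le, le_rfl⟩ h hb0)
  have hxa : x₀ ≠ a := fun h => hψa (h ▸ h0)
  have hxb : x₀ ≠ b := by
    intro h
    apply hψa
    have : k11 * ψ a = 0 := by rw [← hbc, ← h, h0]
    exact (mul_eq_zero.mp this).resolve_left hk11.ne'
  have hx₀Ioo : x₀ ∈ Set.Ioo a b :=
    ⟨lt_of_le_of_ne hx₀.1 (Ne.symm hxa), lt_of_le_of_ne hx₀.2 hxb⟩
  rcases (hψ1ne x₀ hx₀ h0).lt_or_gt with hneg | hpos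
  · refine lastStep hab hp hs hppos (SLR_neg hψ) (by rw [hbc]; ring) hk11 ?_ hx₀Ioo
      (by simp [h0]) (by simpa using neg_pos.mpr hneg)
    intro u₁ hu₁ u₂ hu₂ hz1 hz2
    simp only [neg_eq_zero] at hz1 hz2
    exact hAMO u₁ hu₁ u₂ hu₂ hz1 hz2
  · exact lastStep hab hp hs hppos hψ hbc hk11 hAMO hx₀Ioo h0 hpos
end

/-- If the first Dirichlet eigenfunction `Ψ` (with eigenvalue `lamD`) has no zeros in
`(a,b)` and `ψ` is a real eigenfunction of the coupled condition
`y(b) = k₁₁ y(a)`, `y¹(b) = k₂₁ y(a) + k₂₂ y¹(a)` with `k₁₁ > 0` (and `k₁₁k₂₂ = 1`),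
for an eigenvalue `lam₀ < lamD`, then `ψ` has no zeros in `[a,b]`. -/
theorem stmt19 (a b : ℝ) (hab : a < b) (p q r s : ℝ → ℝ)
    (hp : IntegrableOn (fun x => 1 / p x) (Set.Ioo a b))
    (hq : IntegrableOn q (Set.Ioo a b))
    (hr : IntegrableOn r (Set.Ioo a b))
    (hs : IntegrableOn s (Set.Ioo a b))
    (hppos : ∀ᵐ x ∂(volume.restrict (Set.Ioo a b)), 0 < p x)
    (hrpos : ∀ᵐ x ∂(volume.restrict (Set.Ioo a b)), 0 < r x)
    (lamD : ℝ) (Ψ Ψ1 : ℝ → ℝ)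
    (hΨsol : SLRSolution a b lamD p q r s Ψ Ψ1)
    (hΨbc : Ψ a = 0 ∧ Ψ b = 0)
    (hΨnt : ∃ x ∈ Set.Icc a b, Ψ x ≠ 0)
    (hΨpos : ∀ x ∈ Set.Ioo a b, Ψ x ≠ 0)
    (k11 k21 k22 : ℝ) (hk11 : 0 < k11) (hdetK : k11 * k22 = 1)
    (lam₀ : ℝ) (hlt : lam₀ < lamD)
    (ψ ψ1 : ℝ → ℝ)
    (hψsol : SLRSolution a b lam₀ p q r s ψ ψ1)
    (hψbc : ψ b = k11 * ψ a ∧ ψ1 b = k21 * ψ a + k22 * ψ1 a)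
    (hψnt : ∃ x ∈ Set.Icc a b, ψ x ≠ 0) :
    ∀ x ∈ Set.Icc a b, ψ x ≠ 0 := by
  have hm : (a + b)/2 ∈ Set.Ioo a b := ⟨by linarith, by linarith⟩
  have huIcc : ∀ {x : ℝ}, x ∈ Set.Ioo a b → Set.uIcc x ((a+b)/2) ⊆ Set.Ioo a b := by
    intro x hx
    exact Set.OrdConnected.uIcc_subset Set.ordConnected_Ioo hx hm
  rcases (hΨpos _ hm).lt_or_gt with hneg | hpos
  · -- Ψ < 0 on Ioo, use -Ψ
    have hYpos : ∀ x ∈ Set.Ioo a b, 0 < -Ψ x := by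
      intro x hx
      rcases (hΨpos x hx).lt_or_gt with h | h
      · linarith
      · exfalso
        have hsub := huIcc hx
        have hivt := intermediate_value_uIcc
          (hΨsol.1.mono (hsub.trans Set.Ioo_subset_Icc_self))
        obtain ⟨z, hz, hz0⟩ := hivt (Set.mem_uIcc.mpr (Or.inr ⟨hneg.le, h.le⟩))
        exact hΨpos z (hsub hz) hz0
    exact mainCore hab hp hq hr hs hppos hrpos (SLR_neg hΨsol)
      (by simp [hΨbc.1]) (by simp [hΨbc.2]) hYpos hk11 hlt hψsol hψbc.1 hψnt
  · have hYpos : ∀ x ∈ Set.Ioo a b, 0 < Ψ x := by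
      intro x hx
      rcases (hΨpos x hx).lt_or_gt with h | h
      · exfalso
        have hsub := huIcc hx
        have hivt := intermediate_value_uIcc
          (hΨsol.1.mono (hsub.trans Set.Ioo_subset_Icc_self))
        obtain ⟨z, hz, hz0⟩ := hivt (Set.mem_uIcc.mpr (Or.inl ⟨h.le, hpos.le⟩))
        exact hΨpos z (hsub hz) hz0
      · exact h
    exact mainCore hab hp hq hr hs hppos hrpos hΨsol
      hΨbc.1 hΨbc.2 hYpos hk11 hlt hψsol hψbc.1 hψnt
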